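/- In the axiomatic calculus SkMBiCA, the axioms λᴿ : A ⊢ I ⊗ᴿ A, ρᴿ : A ⊗ᴿ I ⊢ A, and αᴿ : A ⊗ᴿ (B ⊗ᴿ C) ⊢ (A ⊗ᴿ B) ⊗ᴿ C are all derivable. -/
import Mathlib


/-- Formulae of skew monoidal bi-closed logic:
atoms, unit I, left/right tensors and implications. -/
inductive Fma2 : Type
  | atom : ℕ → Fma2
  | I : Fma2
  | tL : Fma2 → Fma2 → Fma2   -- A ⊗ᴸ B
  | lL : Fma2 → Fma2 → Fma2   -- A ⊸ᴸ B
  | tR : Fma2 → Fma2 → Fma2   -- A ⊗ᴿ B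
  | lR : Fma2 → Fma2 → Fma2   -- A ⊸ᴿ B

/-- Derivability in the axiomatic calculus SkMBiCA: `ADer A B` means `A ⊢ B`. -/
inductive ADer : Fma2 → Fma2 → Prop
  | id {A} : ADer A A
  | comp {A B C} : ADer A B → ADer B C → ADer A C
  | tensL {A B C D} : ADer A C → ADer B D → ADer (Fma2.tL A B) (Fma2.tL C D)
  | lolliL {A B C D} : ADer C A → ADer B D → ADer (Fma2.lL A B) (Fma2.lL C D)
  | lolliR {A B C D} : ADer C A → ADer B D → ADer (Fma2.lR A B) (Fma2.lR C D)
  | lam {A} : ADer (Fma2.tL Fma2.I A) A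
  | rho {A} : ADer A (Fma2.tL A Fma2.I)
  | alpha {A B C} : ADer (Fma2.tL (Fma2.tL A B) C) (Fma2.tL A (Fma2.tL B C))
  | gamma {A B} : ADer (Fma2.tL A B) (Fma2.tR B A)
  | gammaInv {A B} : ADer (Fma2.tR A B) (Fma2.tL B A)
  | pi {A B C} : ADer (Fma2.tL A B) C → ADer A (Fma2.lL B C)
  | piInv {A B C} : ADer A (Fma2.lL B C) → ADer (Fma2.tL A B) C
  | piR {A B C} : ADer (Fma2.tR A B) C → ADer A (Fma2.lR B C)
  | piRInv {A B C} : ADer A (Fma2.lR B C) → ADer (Fma2.tR A B) C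

/-- The right skew structural laws λᴿ, ρᴿ, αᴿ are derivable in SkMBiCA. -/
theorem right_skew_laws_derivable :
    (∀ A : Fma2, ADer A (Fma2.tR Fma2.I A)) ∧
    (∀ A : Fma2, ADer (Fma2.tR A Fma2.I) A) ∧
    (∀ A B C : Fma2, ADer (Fma2.tR A (Fma2.tR B C)) (Fma2.tR (Fma2.tR A B) C)) := by
  refine ⟨fun A => ?_, fun A => ?_, fun A B C => ?_⟩
  · exact ADer.comp ADer.rho ADer.gamma
  · exact ADer.comp ADer.gammaInv ADer.lam
  · exact ADer.comp ADer.gammaInv (ADer.comp (ADer.tensL ADer.gammaInv ADer.id)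
      (ADer.comp ADer.alpha (ADer.comp (ADer.tensL ADer.id ADer.gamma) ADer.gamma)))
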